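/- For any n ≥ 1, A(2^n + 1, 2) = 2^n − 1. -/

import Mathlib

open Finset

/-- ℓ1 (Hamming) weight of a `q`-ary vector of length `n`. -/
def hw {n q : ℕ} (x : Fin n → Fin q) : ℕ := ∑ k, (x k : ℕ)

/-- `E_q(n,i)`: the set of `q`-ary vectors of length `n` and weight `i`. -/
def lev (q n i : ℕ) : Finset (Fin n → Fin q) := Finset.univ.filter (fun x => hw x = i)

/-- Coordinatewise domination `x ≤ y`. -/
def domLe {n q : ℕ} (x y : Fin n → Fin q) : Prop := ∀ k, (x k : ℕ) ≤ (y k : ℕ)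

instance {n q : ℕ} (x y : Fin n → Fin q) : Decidable (domLe x y) :=
  inferInstanceAs (Decidable (∀ k, (x k : ℕ) ≤ (y k : ℕ)))

/-- `Y` covers `E_q(n,i-1)`: every vector of weight `i-1` is dominated by some `y ∈ Y`. -/
def Covers (q n i : ℕ) (Y : Finset (Fin n → Fin q)) : Prop :=
  ∀ x ∈ lev q n (i - 1), ∃ y ∈ Y, domLe x y

/-- A codeword class at level `i`: a subset of `E_q(n,i)` covering `E_q(n,i-1)`. -/
def IsClass (q n i : ℕ) (Y : Finset (Fin n → Fin q)) : Prop :=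
  Y ⊆ lev q n i ∧ Covers q n i Y

/-- `A_q(n,i)`: the maximum number of pairwise disjoint codeword classes in `E_q(n,i)`. -/
noncomputable def A (q n i : ℕ) : ℕ :=
  sSup {m | ∃ 𝒴 : Finset (Finset (Fin n → Fin q)),
    (∀ Y ∈ 𝒴, IsClass q n i Y) ∧
    (𝒴 : Set (Finset (Fin n → Fin q))).Pairwise Disjoint ∧ 𝒴.card = m}

-- helpers
lemma fin2_cases (a : Fin 2) : a = 0 ∨ a = 1 := by revert a; decide

lemma fin2_val (a : Fin 2) : (a : ℕ) = if a = 1 then 1 else 0 := by revert a; decide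

lemma hw_card {N : ℕ} (x : Fin N → Fin 2) :
    hw x = (univ.filter fun k => x k = 1).card := by
  rw [hw, Finset.card_filter]
  exact Finset.sum_congr rfl fun k _ => fin2_val _

def Ed (N a b : ℕ) : Fin N → Fin 2 := fun k => if (k : ℕ) = a ∨ (k : ℕ) = b then 1 else 0

lemma Ed_eq_one {N a b : ℕ} {k : Fin N} :
    Ed N a b k = 1 ↔ ((k : ℕ) = a ∨ (k : ℕ) = b) := by
  unfold Ed; split <;> simp_all

lemma Ed_self {N a b : ℕ} (ha : a < N) : Ed N a b ⟨a, ha⟩ = 1 :=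
  Ed_eq_one.mpr (Or.inl rfl)

lemma filter_Ed {N a b : ℕ} (ha : a < N) (hb : b < N) :
    (univ.filter fun k : Fin N => Ed N a b k = 1) = {⟨a, ha⟩, ⟨b, hb⟩} := by
  ext k
  simp only [Finset.mem_filter, mem_univ, true_and, Ed_eq_one]
  simp [Fin.ext_iff]

lemma hw_Ed {N a b : ℕ} (hab : a ≠ b) (ha : a < N) (hb : b < N) :
    hw (Ed N a b) = 2 := by
  rw [hw_card, filter_Ed ha hb, Finset.card_pair]
  simp [Fin.ext_iff, hab]

lemma Ed_mem_lev2 {N a b : ℕ} (hab : a ≠ b) (ha : a < N) (hb : b < N) :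
    Ed N a b ∈ lev 2 N 2 := by
  simp [lev, hw_Ed hab ha hb]

lemma Ed_elim {N a b c d : ℕ} (h : Ed N a b = Ed N c d) (ha : a < N) :
    a = c ∨ a = d := by
  have := congrFun h ⟨a, ha⟩
  rw [Ed_self ha] at this
  exact Ed_eq_one.mp this.symm

lemma Ed_elim' {N a b c d : ℕ} (h : Ed N a b = Ed N c d) (hb : b < N) :
    b = c ∨ b = d := by
  have := congrFun h ⟨b, hb⟩
  rw [show Ed N a b ⟨b, hb⟩ = 1 from Ed_eq_one.mpr (Or.inr rfl)] at this
  exact Ed_eq_one.mp this.symm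

lemma xor_inj {x g h : ℕ} (e : x ^^^ g = x ^^^ h) : g = h := by
  have := congrArg (fun t => x ^^^ t) e
  simpa [xor_cancel_left] using this

lemma xor_xor_self (x h : ℕ) : (x ^^^ h) ^^^ h = x := by
  rw [Nat.xor_assoc, Nat.xor_self, Nat.xor_zero]

lemma weight_one {N : ℕ} {x : Fin N → Fin 2} (hx : hw x = 1) :
    ∃ a : Fin N, x a = 1 ∧ ∀ k, k ≠ a → x k = 0 := by
  rw [hw_card] at hx
  obtain ⟨a, ha⟩ := Finset.card_eq_one.mp hx
  refine ⟨a, ?_, ?_⟩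
  · have : a ∈ univ.filter fun k => x k = 1 := ha ▸ Finset.mem_singleton_self a
    exact (Finset.mem_filter.mp this).2
  · intro k hk
    rcases fin2_cases (x k) with h | h
    · exact h
    · exfalso
      have : k ∈ univ.filter fun k => x k = 1 := Finset.mem_filter.mpr ⟨mem_univ _, h⟩
      rw [ha, Finset.mem_singleton] at this
      exact hk this

lemma domLe_to {N : ℕ} {x y : Fin N → Fin 2} {a : Fin N}
    (hxa : x a = 1) (h : domLe x y) : y a = 1 := by
  have := h a
  rw [hxa] at this
  rcases fin2_cases (y a) with h' | h'
  · rw [h'] at this; simp at this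
  · exact h'

lemma domLe_of {N : ℕ} {x y : Fin N → Fin 2} {a : Fin N}
    (h0 : ∀ k, k ≠ a → x k = 0) (hy : y a = 1) : domLe x y := by
  intro k
  by_cases hk : k = a
  · subst hk; rw [hy]; rcases fin2_cases (x k) with h | h <;> simp [h]
  · rw [h0 k hk]; simp

/-- The `g`-th codeword class. -/
def cls (n g : ℕ) : Finset (Fin (2 ^ n + 1) → Fin 2) :=
  insert (Ed (2 ^ n + 1) g (2 ^ n))
    ((Finset.range (2 ^ n)).image fun x => Ed (2 ^ n + 1) x (x ^^^ g))

lemma xor_ne {x g : ℕ} (hg : g ≠ 0) : x ≠ x ^^^ g := by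
  intro h
  have : x ^^^ x = x ^^^ (x ^^^ g) := by rw [← h]
  rw [Nat.xor_self, xor_cancel_left] at this
  exact hg this.symm

lemma cls_isClass (n g : ℕ) (hg1 : 1 ≤ g) (hg : g < 2 ^ n) :
    IsClass 2 (2 ^ n + 1) 2 (cls n g) := by
  constructor
  · intro y hy
    rcases Finset.mem_insert.mp hy with h | h
    · subst h
      exact Ed_mem_lev2 (by omega) (by omega) (by omega)
    · obtain ⟨x, hx, rfl⟩ := Finset.mem_image.mp h
      rw [Finset.mem_range] at hx
      have hxg : x ^^^ g < 2 ^ n := Nat.xor_lt_two_pow hx hg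
      exact Ed_mem_lev2 (xor_ne (by omega)) (by omega) (by omega)
  · intro x hx
    rw [lev, Finset.mem_filter] at hx
    obtain ⟨a, ha1, ha0⟩ := weight_one hx.2
    by_cases hcase : (a : ℕ) < 2 ^ n
    · refine ⟨Ed (2 ^ n + 1) (a : ℕ) ((a : ℕ) ^^^ g), ?_, ?_⟩
      · exact Finset.mem_insert_of_mem (Finset.mem_image.mpr
          ⟨(a : ℕ), Finset.mem_range.mpr hcase, rfl⟩)
      · exact domLe_of ha0 (Ed_eq_one.mpr (Or.inl rfl))
    · have ha : (a : ℕ) = 2 ^ n := by have := a.isLt; omega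
      refine ⟨Ed (2 ^ n + 1) g (2 ^ n), Finset.mem_insert_self _ _, ?_⟩
      exact domLe_of ha0 (Ed_eq_one.mpr (Or.inr ha))

lemma cls_disjoint (n : ℕ) {g h : ℕ} (hg1 : 1 ≤ g) (hg : g < 2 ^ n)
    (hh1 : 1 ≤ h) (hh : h < 2 ^ n) (hgh : g ≠ h) :
    Disjoint (cls n g) (cls n h) := by
  rw [Finset.disjoint_left]
  intro y hyg hyh
  rcases Finset.mem_insert.mp hyg with e1 | e1 <;>
    rcases Finset.mem_insert.mp hyh with e2 | e2
  · have e : Ed (2 ^ n + 1) g (2 ^ n) = Ed (2 ^ n + 1) h (2 ^ n) := e1.symm.trans e2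
    rcases Ed_elim e (by omega) with h' | h'
    · exact hgh h'
    · omega
  · obtain ⟨x, hx, e2'⟩ := Finset.mem_image.mp e2
    rw [Finset.mem_range] at hx
    have hxh : x ^^^ h < 2 ^ n := Nat.xor_lt_two_pow hx hh
    have e : Ed (2 ^ n + 1) g (2 ^ n) = Ed (2 ^ n + 1) x (x ^^^ h) :=
      e1.symm.trans e2'.symm
    rcases Ed_elim' e (by omega) with h' | h' <;> omega
  · obtain ⟨x, hx, e1'⟩ := Finset.mem_image.mp e1
    rw [Finset.mem_range] at hx
    have hxg : x ^^^ g < 2 ^ n := Nat.xor_lt_two_pow hx hg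
    have e : Ed (2 ^ n + 1) h (2 ^ n) = Ed (2 ^ n + 1) x (x ^^^ g) :=
      e2.symm.trans e1'.symm
    rcases Ed_elim' e (by omega) with h' | h' <;> omega
  · obtain ⟨x, hx, e1'⟩ := Finset.mem_image.mp e1
    obtain ⟨z, hz, e2'⟩ := Finset.mem_image.mp e2
    rw [Finset.mem_range] at hx hz
    have e : Ed (2 ^ n + 1) x (x ^^^ g) = Ed (2 ^ n + 1) z (z ^^^ h) :=
      e1'.trans e2'.symm
    have hxg : x ^^^ g < 2 ^ n := Nat.xor_lt_two_pow hx hg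
    rcases Ed_elim e (by omega) with h1 | h1
    · subst h1
      rcases Ed_elim' e (by omega) with h2 | h2
      · exact xor_ne (show g ≠ 0 by omega) h2.symm
      · exact hgh (xor_inj h2)
    · have hz' : z = x ^^^ h := by rw [h1, xor_xor_self]
      subst hz'
      rw [xor_xor_self] at e
      rcases Ed_elim' e (by omega) with h2 | h2
      · exact hgh (xor_inj h2)
      · exact xor_ne (show g ≠ 0 by omega) h2.symm

lemma hw_Ed_self {N a : ℕ} (ha : a < N) : hw (Ed N a a) = 1 := by
  rw [hw_card, filter_Ed ha ha]
  simp

lemma lower (n : ℕ) (hn : 1 ≤ n) :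
    ∃ 𝒴 : Finset (Finset (Fin (2 ^ n + 1) → Fin 2)),
      (∀ Y ∈ 𝒴, IsClass 2 (2 ^ n + 1) 2 Y) ∧
      (𝒴 : Set (Finset (Fin (2 ^ n + 1) → Fin 2))).Pairwise Disjoint ∧
      𝒴.card = 2 ^ n - 1 := by
  have h2 : 2 ≤ 2 ^ n := by calc 2 = 2 ^ 1 := rfl
                                 _ ≤ 2 ^ n := Nat.pow_le_pow_right (by norm_num) hn
  refine ⟨(Finset.Icc 1 (2 ^ n - 1)).image (cls n), ?_, ?_, ?_⟩
  · intro Y hY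
    obtain ⟨g, hg, rfl⟩ := Finset.mem_image.mp hY
    rw [Finset.mem_Icc] at hg
    exact cls_isClass n g hg.1 (by omega)
  · intro Y hY Z hZ hYZ
    rw [Finset.mem_coe] at hY hZ
    obtain ⟨g, hg, rfl⟩ := Finset.mem_image.mp hY
    obtain ⟨h, hh, rfl⟩ := Finset.mem_image.mp hZ
    rw [Finset.mem_Icc] at hg hh
    have hgh : g ≠ h := fun e => hYZ (by rw [e])
    exact cls_disjoint n hg.1 (by omega) hh.1 (by omega) hgh
  · have hinj : Set.InjOn (cls n) ↑(Finset.Icc 1 (2 ^ n - 1)) := by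
      intro g hg h hh e
      by_contra hgh
      rw [Finset.mem_coe, Finset.mem_Icc] at hg hh
      have hd := cls_disjoint n hg.1 (by omega) hh.1 (by omega) hgh
      rw [e, disjoint_self] at hd
      exact absurd hd (Finset.nonempty_iff_ne_empty.mp ⟨_, Finset.mem_insert_self _ _⟩)
    rw [Finset.card_image_of_injOn hinj, Nat.card_Icc]
    omega

lemma class_card (n : ℕ) (hn : 1 ≤ n) (Y : Finset (Fin (2 ^ n + 1) → Fin 2))
    (hY : IsClass 2 (2 ^ n + 1) 2 Y) : 2 ^ (n - 1) + 1 ≤ Y.card := by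
  obtain ⟨hsub, hcov⟩ := hY
  have hmem : ∀ a : Fin (2 ^ n + 1), Ed (2 ^ n + 1) (a : ℕ) (a : ℕ) ∈ lev 2 (2 ^ n + 1) 1 := by
    intro a
    simp [lev, hw_Ed_self a.isLt]
  choose f hf1 hf2 using fun a : Fin (2 ^ n + 1) => hcov _ (hmem a)
  have hNle : (univ : Finset (Fin (2 ^ n + 1))).card ≤ 2 * Y.card := by
    apply Finset.card_le_mul_card_image_of_maps_to (fun a _ => hf1 a)
    intro y hy
    have hsub2 : (univ.filter fun a => f a = y) ⊆ (univ.filter fun k => y k = 1) := by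
      intro a ha
      rw [Finset.mem_filter] at ha ⊢
      refine ⟨mem_univ _, ?_⟩
      have h1 : Ed (2 ^ n + 1) (a : ℕ) (a : ℕ) a = 1 := Ed_eq_one.mpr (Or.inl rfl)
      have := domLe_to h1 (hf2 a)
      rwa [ha.2] at this
    calc (univ.filter fun a => f a = y).card
        ≤ (univ.filter fun k => y k = 1).card := Finset.card_le_card hsub2
      _ = 2 := by
          have := hsub hy
          rw [lev, Finset.mem_filter, hw_card] at this
          exact this.2
  rw [Finset.card_univ, Fintype.card_fin] at hNle
  have h2 : 2 ^ n = 2 * 2 ^ (n - 1) := by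
    conv_lhs => rw [show n = (n - 1) + 1 by omega]
    ring
  omega

lemma lev_card (n : ℕ) : (lev 2 (2 ^ n + 1) 2).card ≤ (2 ^ n + 1).choose 2 := by
  have h : (lev 2 (2 ^ n + 1) 2).card
      ≤ (Finset.powersetCard 2 (univ : Finset (Fin (2 ^ n + 1)))).card := by
    apply Finset.card_le_card_of_injOn (fun y => univ.filter fun k => y k = 1)
    · intro y hy
      rw [Finset.mem_coe, lev, Finset.mem_filter, hw_card] at hy
      rw [Finset.mem_coe, Finset.mem_powersetCard]
      exact ⟨Finset.filter_subset _ _, hy.2⟩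
    · intro y hy z hz e
      simp only at e
      funext k
      have hk := Finset.ext_iff.mp e k
      simp only [Finset.mem_filter, mem_univ, true_and] at hk
      rcases fin2_cases (y k) with h1 | h1 <;> rcases fin2_cases (z k) with h2 | h2 <;>
        simp_all
  rwa [Finset.card_powersetCard, Finset.card_univ, Fintype.card_fin] at h

lemma upper (n : ℕ) (hn : 1 ≤ n) (m : ℕ)
    (hm : ∃ 𝒴 : Finset (Finset (Fin (2 ^ n + 1) → Fin 2)),
      (∀ Y ∈ 𝒴, IsClass 2 (2 ^ n + 1) 2 Y) ∧
      (𝒴 : Set (Finset (Fin (2 ^ n + 1) → Fin 2))).Pairwise Disjoint ∧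
      𝒴.card = m) : m ≤ 2 ^ n - 1 := by
  obtain ⟨𝒴, hclass, hdisj, hcard⟩ := hm
  have hdisj' : ∀ Y ∈ 𝒴, ∀ Z ∈ 𝒴, Y ≠ Z → Disjoint Y Z := fun Y hY Z hZ h =>
    hdisj (Finset.mem_coe.mpr hY) (Finset.mem_coe.mpr hZ) h
  have hsum : ∑ Y ∈ 𝒴, Y.card ≤ (lev 2 (2 ^ n + 1) 2).card := by
    rw [← Finset.card_biUnion hdisj']
    apply Finset.card_le_card
    intro y hy
    obtain ⟨Y, hY, hyY⟩ := Finset.mem_biUnion.mp hy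
    exact (hclass Y hY).1 hyY
  have hlow : m * (2 ^ (n - 1) + 1) ≤ ∑ Y ∈ 𝒴, Y.card := by
    have := Finset.card_nsmul_le_sum 𝒴 (fun Y => Y.card) (2 ^ (n - 1) + 1)
      (fun Y hY => class_card n hn Y (hclass Y hY))
    rwa [hcard, smul_eq_mul] at this
  have hch : (2 ^ n + 1).choose 2 = 2 ^ (n - 1) * (2 ^ n + 1) := by
    have h2 : 2 ^ n = 2 * 2 ^ (n - 1) := by
      conv_lhs => rw [show n = (n - 1) + 1 by omega]
      ring
    rw [Nat.choose_two_right, Nat.add_sub_cancel, h2,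
      show (2 * 2 ^ (n - 1) + 1) * (2 * 2 ^ (n - 1))
        = 2 * (2 ^ (n - 1) * (2 * 2 ^ (n - 1) + 1)) by ring]
    exact Nat.mul_div_cancel_left _ (by norm_num)
  have hfin : m * (2 ^ (n - 1) + 1) ≤ 2 ^ (n - 1) * (2 ^ n + 1) := by
    calc m * (2 ^ (n - 1) + 1) ≤ ∑ Y ∈ 𝒴, Y.card := hlow
      _ ≤ (lev 2 (2 ^ n + 1) 2).card := hsum
      _ ≤ (2 ^ n + 1).choose 2 := lev_card n
      _ = 2 ^ (n - 1) * (2 ^ n + 1) := hch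
  have h2 : 2 ^ n = 2 * 2 ^ (n - 1) := by
    conv_lhs => rw [show n = (n - 1) + 1 by omega]
    ring
  set K := 2 ^ (n - 1) with hK
  have hK1 : 1 ≤ K := Nat.one_le_two_pow
  by_contra hcon
  push_neg at hcon
  have hmge : 2 * K ≤ m := by omega
  have : (2 * K) * (K + 1) ≤ m * (K + 1) := Nat.mul_le_mul_right _ hmge
  nlinarith

/-- For n ≥ 1, A(2^n + 1, 2) = 2^n - 1. -/
theorem stmt_9 (n : ℕ) (hn : 1 ≤ n) : A 2 (2 ^ n + 1) 2 = 2 ^ n - 1 := by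
  apply le_antisymm
  · exact csSup_le ⟨_, lower n hn⟩ (fun m hm => upper n hn m hm)
  · exact le_csSup ⟨2 ^ n - 1, fun m hm => upper n hn m hm⟩ (lower n hn)
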